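/- arXiv:2605.17238 — 3 statements merged into one kernel-verified Lean document; each statement's English description precedes it below -/
import Mathlib

section
/- Let K ≥ 1, θ_1,…,θ_K ∈ (0,1], nonnegative reals n_1,…,n_K with D := Σ_k n_k θ_k > 0, and nonnegative reals w_1,…,w_K with w_k ≤ n_k. Define S(v) = Σ_k (w_k − n_k vθ_k/(1+vθ_k)), let ṽ ≥ 0 be the unique root of S, and set v̂ = min(ṽ, 1). Then for every v* ∈ (0,1], |S(v*)| ≥ (1/4) · D · |v̂ − v*|. -/
theorem stmt1 (K : ℕ) (hK : 1 ≤ K) (θ n w : Fin K → ℝ)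
    (hθ : ∀ k, 0 < θ k ∧ θ k ≤ 1) (hn : ∀ k, 0 ≤ n k)
    (hw : ∀ k, 0 ≤ w k ∧ w k ≤ n k)
    (hD : 0 < ∑ k, n k * θ k)
    (S : ℝ → ℝ)
    (hS : S = fun v => ∑ k, (w k - n k * (v * θ k / (1 + v * θ k))))
    (vtilde : ℝ) (hvt : 0 ≤ vtilde) (hroot : S vtilde = 0)
    (vhat : ℝ) (hvhat : vhat = min vtilde 1) :
    ∀ vstar : ℝ, 0 < vstar → vstar ≤ 1 →
      |S vstar| ≥ (1 / 4) * (∑ k, n k * θ k) * |vhat - vstar| := by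
  -- difference identity
  have hdiff : ∀ a b : ℝ, 0 ≤ a → 0 ≤ b →
      S a - S b = ∑ k, n k * ((b - a) * θ k / ((1 + a * θ k) * (1 + b * θ k))) := by
    intro a b ha hb
    subst hS
    simp only
    rw [← Finset.sum_sub_distrib]
    apply Finset.sum_congr rfl
    intro k _
    have h1 : (0:ℝ) < 1 + a * θ k := by nlinarith [(hθ k).1]
    have h2 : (0:ℝ) < 1 + b * θ k := by nlinarith [(hθ k).1]
    rw [← mul_div_mul_right (a * θ k) _ h2.ne', ← mul_div_mul_left (b * θ k) _ h1.ne']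
    ring
  -- monotone: 0 ≤ a ≤ b ⟹ S b ≤ S a
  have hmono : ∀ a b : ℝ, 0 ≤ a → a ≤ b → S b ≤ S a := by
    intro a b ha hab
    have hb : 0 ≤ b := le_trans ha hab
    have := hdiff a b ha hb
    have hsum : 0 ≤ ∑ k, n k * ((b - a) * θ k / ((1 + a * θ k) * (1 + b * θ k))) := by
      apply Finset.sum_nonneg
      intro k _
      have h1 : (0:ℝ) < 1 + a * θ k := by nlinarith [(hθ k).1]
      have h2 : (0:ℝ) < 1 + b * θ k := by nlinarith [(hθ k).1]
      apply mul_nonneg (hn k)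
      apply div_nonneg _ (le_of_lt (mul_pos h1 h2))
      have := (hθ k).1
      nlinarith
    linarith
  -- quantitative bound on [0,1]
  have hquant : ∀ a b : ℝ, 0 ≤ a → a ≤ b → b ≤ 1 →
      (1 / 4) * (∑ k, n k * θ k) * (b - a) ≤ S a - S b := by
    intro a b ha hab hb1
    have hb : 0 ≤ b := le_trans ha hab
    rw [hdiff a b ha hb]
    rw [Finset.mul_sum, Finset.sum_mul]
    apply Finset.sum_le_sum
    intro k _
    have hθk := (hθ k).1
    have hθk1 := (hθ k).2
    have h1 : (0:ℝ) < 1 + a * θ k := by nlinarith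
    have h2 : (0:ℝ) < 1 + b * θ k := by nlinarith
    have hx : a * θ k ≤ 1 := by nlinarith
    have hy : b * θ k ≤ 1 := by nlinarith
    have hxy : (a * θ k) * (b * θ k) ≤ 1 := by
      nlinarith [mul_nonneg (mul_nonneg ha hθk.le) hb]
    have hden : (1 + a * θ k) * (1 + b * θ k) ≤ 4 := by nlinarith
    have hnum : 0 ≤ (b - a) * θ k := by nlinarith
    have hstep : (b - a) * θ k / 4 ≤ (b - a) * θ k / ((1 + a * θ k) * (1 + b * θ k)) :=
      div_le_div_of_nonneg_left hnum (mul_pos h1 h2) hden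
    have hnk := hn k
    calc (1:ℝ) / 4 * (n k * θ k) * (b - a) = n k * ((b - a) * θ k / 4) := by ring
      _ ≤ n k * ((b - a) * θ k / ((1 + a * θ k) * (1 + b * θ k))) := by
          exact mul_le_mul_of_nonneg_left hstep hnk
  intro vstar hv0 hv1
  have hvstar : (0:ℝ) ≤ vstar := le_of_lt hv0
  have hvhat0 : 0 ≤ vhat := by rw [hvhat]; exact le_min hvt zero_le_one
  have hvhat1 : vhat ≤ 1 := by rw [hvhat]; exact min_le_right _ _
  have hD4 : 0 ≤ (1/4) * (∑ k, n k * θ k) := by positivity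
  rcases le_total vstar vhat with hle | hle
  · -- vstar ≤ vhat, need S vstar ≥ (D/4)(vhat - vstar), and S vhat ≥ 0
    have hSvhat : 0 ≤ S vhat := by
      rcases le_total vtilde 1 with h | h
      · have : vhat = vtilde := by rw [hvhat, min_eq_left h]
        rw [this, hroot]
      · have hv1' : vhat = 1 := by rw [hvhat, min_eq_right h]
        have := hmono vhat vtilde (by linarith [hvhat0]) (by rw [hv1']; exact h)
        rw [hroot] at this; linarith
    have := hquant vstar vhat hvstar hle hvhat1
    have habs : |vhat - vstar| = vhat - vstar := abs_of_nonneg (by linarith)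
    have hprod : 0 ≤ (1/4 * ∑ k, n k * θ k) * (vhat - vstar) :=
      mul_nonneg hD4 (by linarith)
    rw [ge_iff_le, habs]
    have hSpos : 0 ≤ S vstar := by linarith
    rw [abs_of_nonneg hSpos]
    linarith
  · -- vhat ≤ vstar
    rcases le_total vtilde 1 with h | h
    · have hveq : vhat = vtilde := by rw [hvhat, min_eq_left h]
      have hq := hquant vhat vstar hvhat0 hle hv1
      have hSvhat : S vhat = 0 := by rw [hveq]; exact hroot
      have habs : |vhat - vstar| = vstar - vhat := by
        rw [abs_of_nonpos (by linarith)]; ring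
      have hprod : 0 ≤ (1/4 * ∑ k, n k * θ k) * (vstar - vhat) :=
        mul_nonneg hD4 (by linarith)
      have hSneg : S vstar ≤ 0 := by linarith
      rw [ge_iff_le, habs, abs_of_nonpos hSneg]
      linarith
    · have hv1' : vhat = 1 := by rw [hvhat, min_eq_right h]
      have hveq : vstar = vhat := le_antisymm (by rw [hv1']; exact hv1) hle
      rw [hveq, sub_self, abs_zero, mul_zero]
      exact abs_nonneg _
end

section
/- Let N, K be positive integers with K ≤ N, let r_1,…,r_N ≥ 0, and let (α_{i,k}) and (ᾱ_{i,k}) be N×K matrices with nonnegative entries satisfying ᾱ_{i,k} ≥ α_{i,k} for all i, k. Let F be the set of pairs (S, σ) with S ⊆ [N], |S| ≤ K, and σ : S → [K] injective, and define R((S,σ), α) = (Σ_{i∈S} r_i α_{i,σ(i)}) / (1 + Σ_{j∈S} α_{j,σ(j)}). Then max over F of R(·, ᾱ) is at least max over F of R(·, α). -/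
theorem stmt6 (N K : ℕ) (hN : 0 < N) (hK0 : 0 < K) (hK : K ≤ N)
    (r : Fin N → ℝ) (hr : ∀ i, 0 ≤ r i)
    (α αbar : Fin N → Fin K → ℝ)
    (hα : ∀ i k, 0 ≤ α i k) (hle : ∀ i k, α i k ≤ αbar i k)
    (Feas : Set (Finset (Fin N) × (Fin N → Fin K)))
    (hFeas : Feas = {p | p.1.card ≤ K ∧ Set.InjOn p.2 ↑p.1})
    (R : (Finset (Fin N) × (Fin N → Fin K)) → (Fin N → Fin K → ℝ) → ℝ)
    (hR : ∀ p β, R p β =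
      (∑ i ∈ p.1, r i * β i (p.2 i)) / (1 + ∑ j ∈ p.1, β j (p.2 j))) :
    (⨆ p : Feas, R p.val αbar) ≥ ⨆ p : Feas, R p.val α := by
  have hαbar : ∀ i k, 0 ≤ αbar i k := fun i k => (hα i k).trans (hle i k)
  have hune : (Finset.univ : Finset (Fin N)).Nonempty := ⟨⟨0, hN⟩, Finset.mem_univ _⟩
  set M : ℝ := Finset.univ.sup' hune r with hMdef
  have hM0 : 0 ≤ M := le_trans (hr ⟨0, hN⟩) (Finset.le_sup' r (Finset.mem_univ _))
  have hMr : ∀ i, r i ≤ M := fun i => Finset.le_sup' r (Finset.mem_univ i)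
  have hbound : ∀ p : Feas, R p.val αbar ≤ M := by
    rintro ⟨⟨S, σ⟩, hp⟩
    rw [hR]
    have hB : 0 ≤ ∑ j ∈ S, αbar j (σ j) := Finset.sum_nonneg fun j _ => hαbar _ _
    rw [div_le_iff₀ (by linarith)]
    have h : ∑ i ∈ S, r i * αbar i (σ i) ≤ ∑ i ∈ S, M * αbar i (σ i) :=
      Finset.sum_le_sum fun i _ => mul_le_mul_of_nonneg_right (hMr i) (hαbar _ _)
    rw [← Finset.mul_sum] at h
    nlinarith
  have hbdd : BddAbove (Set.range fun p : Feas => R p.val αbar) := by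
    refine ⟨M, ?_⟩; rintro x ⟨p, rfl⟩; exact hbound p
  haveI : Nonempty Feas := by
    refine ⟨⟨(∅, fun _ => ⟨0, hK0⟩), ?_⟩⟩
    rw [hFeas]
    constructor
    · simp
    · simp
  apply ciSup_le
  rintro ⟨⟨S, σ⟩, hp⟩
  rw [hFeas] at hp
  obtain ⟨hcard, hinj⟩ := hp
  set t := R (S, σ) α with ht
  set S' := S.filter (fun i => t ≤ r i) with hS'
  have hsub : S' ⊆ S := Finset.filter_subset _ _
  have hp' : (S', σ) ∈ Feas := by
    rw [hFeas]
    exact ⟨le_trans (Finset.card_le_card hsub) hcard,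
      hinj.mono (by exact_mod_cast Finset.coe_subset.mpr hsub)⟩
  have hBα : 0 ≤ ∑ j ∈ S, α j (σ j) := Finset.sum_nonneg fun j _ => hα _ _
  have hdα : (0:ℝ) < 1 + ∑ j ∈ S, α j (σ j) := by linarith
  have hA : t * (1 + ∑ j ∈ S, α j (σ j)) = ∑ i ∈ S, r i * α i (σ i) := by
    rw [ht, hR]; field_simp
  have h1 : ∑ i ∈ S, (r i - t) * α i (σ i) = t := by
    have h : ∑ i ∈ S, (r i - t) * α i (σ i)
        = ∑ i ∈ S, r i * α i (σ i) - t * ∑ i ∈ S, α i (σ i) := by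
      rw [Finset.mul_sum, ← Finset.sum_sub_distrib]
      exact Finset.sum_congr rfl fun i _ => by ring
    rw [h, ← hA]; ring
  have h2 : t ≤ ∑ i ∈ S', (r i - t) * α i (σ i) := by
    rw [hS']
    have hsplit := Finset.sum_filter_add_sum_filter_not S (fun i => t ≤ r i)
      (fun i => (r i - t) * α i (σ i))
    have hneg : ∑ i ∈ S.filter (fun i => ¬ t ≤ r i), (r i - t) * α i (σ i) ≤ 0 :=
      Finset.sum_nonpos fun i hi =>
        mul_nonpos_of_nonpos_of_nonneg
          (by have := (Finset.mem_filter.mp hi).2; linarith) (hα _ _)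
    linarith [hsplit, h1]
  have h3 : ∑ i ∈ S', (r i - t) * α i (σ i) ≤ ∑ i ∈ S', (r i - t) * αbar i (σ i) :=
    Finset.sum_le_sum fun i hi =>
      mul_le_mul_of_nonneg_left (hle _ _)
        (by have := (Finset.mem_filter.mp hi).2; linarith)
  have hB' : 0 ≤ ∑ j ∈ S', αbar j (σ j) := Finset.sum_nonneg fun j _ => hαbar _ _
  have key : t ≤ R (S', σ) αbar := by
    rw [hR]
    rw [le_div_iff₀ (by linarith)]
    have h4 : ∑ i ∈ S', (r i - t) * αbar i (σ i)
        = ∑ i ∈ S', r i * αbar i (σ i) - t * ∑ i ∈ S', αbar i (σ i) := by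
      rw [Finset.mul_sum, ← Finset.sum_sub_distrib]
      exact Finset.sum_congr rfl fun i _ => by ring
    nlinarith [h2.trans h3]
  calc t ≤ R (S', σ) αbar := key
    _ ≤ ⨆ p : Feas, R p.val αbar := le_ciSup hbdd ⟨(S', σ), hp'⟩
end

section
/- Fix r_1,…,r_N ≥ 0 and a nonnegative N×K matrix (α_{i,k}), with F the set of feasible assortment-positioning pairs (S ⊆ [N], |S| ≤ K, σ : S → [K] injective, including the empty assortment). Define G(ρ) = max_{(S,σ)∈F} Σ_{i∈S} (r_i − ρ) α_{i,σ(i)} − ρ for ρ ≥ 0. Then: (a) G is strictly decreasing on [0,∞); (b) ρ₀ ≥ 0 satisfies G(ρ₀) = 0 if and only if ρ₀ = max_{(S,σ)∈F} (Σ_{i∈S} r_i α_{i,σ(i)})/(1 + Σ_{j∈S} α_{j,σ(j)}). -/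
theorem stmt7 (N K : ℕ) (hN : 0 < N) (hK0 : 0 < K)
    (r : Fin N → ℝ) (hr : ∀ i, 0 ≤ r i)
    (α : Fin N → Fin K → ℝ) (hα : ∀ i k, 0 ≤ α i k)
    (Feas : Set (Finset (Fin N) × (Fin N → Fin K)))
    (hFeas : Feas = {p | p.1.card ≤ K ∧ Set.InjOn p.2 ↑p.1})
    (G : ℝ → ℝ)
    (hG : ∀ ρ, G ρ =
      (⨆ p : Feas, ∑ i ∈ p.val.1, (r i - ρ) * α i (p.val.2 i)) - ρ) :
    StrictAntiOn G (Set.Ici (0 : ℝ)) ∧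
      ∀ ρ₀ : ℝ, 0 ≤ ρ₀ →
        (G ρ₀ = 0 ↔
          ρ₀ = ⨆ p : Feas,
            (∑ i ∈ p.val.1, r i * α i (p.val.2 i)) /
              (1 + ∑ j ∈ p.val.1, α j (p.val.2 j))) := by
  haveI hne : Nonempty Feas := ⟨⟨(∅, fun _ => ⟨0, hK0⟩), by
    rw [hFeas]; exact ⟨by simp, by simp⟩⟩⟩
  haveI : Finite Feas := Subtype.finite
  let A : Feas → ℝ := fun p => ∑ i ∈ p.val.1, r i * α i (p.val.2 i)
  let B : Feas → ℝ := fun p => ∑ i ∈ p.val.1, α i (p.val.2 i)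
  have hsum : ∀ (p : Feas) (ρ : ℝ),
      ∑ i ∈ p.val.1, (r i - ρ) * α i (p.val.2 i) = A p - ρ * B p := by
    intro p ρ
    simp only [A, B, sub_mul, Finset.sum_sub_distrib, Finset.mul_sum]
  have hG' : ∀ ρ, G ρ = (⨆ p : Feas, A p - ρ * B p) - ρ := by
    intro ρ; rw [hG]; congr 1; exact iSup_congr (fun p => hsum p ρ)
  have hB0 : ∀ p, 0 ≤ B p := fun p => Finset.sum_nonneg fun i _ => hα _ _
  have hA0 : ∀ p, 0 ≤ A p := fun p =>
    Finset.sum_nonneg fun i _ => mul_nonneg (hr _) (hα _ _)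
  have hden : ∀ p : Feas, 0 < 1 + B p := fun p => by linarith [hB0 p]
  have hbdd : ∀ f : Feas → ℝ, BddAbove (Set.range f) :=
    fun f => (Set.finite_range f).bddAbove
  have hSA : StrictAnti G := by
    intro x y hxy
    have h1 : (⨆ p : Feas, A p - y * B p) ≤ (⨆ p : Feas, A p - x * B p) := by
      apply ciSup_le
      intro p
      calc A p - y * B p ≤ A p - x * B p := by nlinarith [hB0 p]
        _ ≤ _ := le_ciSup (f := fun p : Feas => A p - x * B p) (hbdd _) p
    rw [hG' x, hG' y]; linarith
  refine ⟨hSA.strictAntiOn _, ?_⟩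
  set R : ℝ := ⨆ p : Feas, A p / (1 + B p) with hR
  obtain ⟨pm, hpm⟩ := Finite.exists_max (fun p : Feas => A p / (1 + B p))
  have hRm : R = A pm / (1 + B pm) :=
    le_antisymm (ciSup_le hpm) (le_ciSup (f := fun p : Feas => A p / (1 + B p)) (hbdd _) pm)
  have hR0 : 0 ≤ R := hRm ▸ div_nonneg (hA0 pm) (hden pm).le
  have hGR : G R = 0 := by
    rw [hG']
    have hle : (⨆ p : Feas, A p - R * B p) ≤ R := by
      apply ciSup_le
      intro p
      have h2 : A p / (1 + B p) ≤ R := le_ciSup (f := fun p : Feas => A p / (1 + B p)) (hbdd _) p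
      rw [div_le_iff₀ (hden p)] at h2
      nlinarith
    have h' : R * (1 + B pm) = A pm := (eq_div_iff (hden pm).ne').mp hRm
    have heq : A pm - R * B pm = R := by linear_combination -h'
    have hge : R ≤ (⨆ p : Feas, A p - R * B p) := by
      have h3 := le_ciSup (f := fun p : Feas => A p - R * B p) (hbdd _) pm
      rwa [heq] at h3
    linarith [le_antisymm hle hge]
  intro ρ₀ hρ₀
  constructor
  · intro h0
    exact (hSA.strictAntiOn (Set.Ici 0)).injOn hρ₀ hR0 (by rw [h0, hGR])
  · intro h; rw [h]; exact hGR
end
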